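/- Let R be a commutative ring, let L be a Lie algebra over R, let D : L → L be a derivation of L (an R-linear map with D⁅x,y⁆ = ⁅D x, y⁆ + ⁅x, D y⁆), and let t, B ∈ L. Then for every n ∈ ℕ: D((ad t)^n B) = Σ_{k=1}^{n} (n choose k) · ⁅(ad t)^{k−1}(D t), (ad t)^{n−k} B⁆ + (ad t)^n (D B), where ad t denotes the adjoint map x ↦ ⁅t, x⁆ and (n choose k) acts by the natural ℕ-scalar multiplication. -/
import Mathlib


private lemma stmt4_aux {R : Type*} {L : Type*} [CommRing R] [LieRing L] [LieAlgebra R L]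
    (D : L →ₗ[R] L) (hD : ∀ x y : L, D ⁅x, y⁆ = ⁅D x, y⁆ + ⁅x, D y⁆)
    (t B : L) (n : ℕ) :
    D (((LieAlgebra.ad R L t) ^ n) B) =
      (∑ i ∈ Finset.range n,
        (n.choose (i + 1)) • ⁅((LieAlgebra.ad R L t) ^ i) (D t),
                        ((LieAlgebra.ad R L t) ^ (n - (i + 1))) B⁆) +
      ((LieAlgebra.ad R L t) ^ n) (D B) := by
  set A := LieAlgebra.ad R L t with hA
  induction n with
  | zero => simp
  | succ n ih =>
    have hpow : ∀ m (x : L), (A ^ (m + 1)) x = ⁅t, (A ^ m) x⁆ := by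
      intro m x
      rw [pow_succ']
      simp [hA, LieAlgebra.ad_apply]
    rw [hpow n B, hD, ih]
    rw [lie_add]
    have lsum : ∀ (f : ℕ → L) (m : ℕ), ⁅t, ∑ i ∈ Finset.range m, f i⁆
        = ∑ i ∈ Finset.range m, ⁅t, f i⁆ := by
      intro f m
      rw [← LieAlgebra.ad_apply (R := R), map_sum]
      simp [LieAlgebra.ad_apply]
    rw [lsum]
    have key : ∀ i ∈ Finset.range n,
        ⁅t, (n.choose (i + 1)) • ⁅(A ^ i) (D t), (A ^ (n - (i + 1))) B⁆⁆
        = (n.choose (i + 1)) • ⁅(A ^ (i + 1)) (D t), (A ^ (n - (i + 1))) B⁆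
          + (n.choose (i + 1)) • ⁅(A ^ i) (D t), (A ^ (n - i)) B⁆ := by
      intro i hi
      rw [Finset.mem_range] at hi
      have h1 : n - i = (n - (i + 1)) + 1 := by omega
      rw [lie_nsmul, leibniz_lie, smul_add, ← hpow i (D t), h1, ← hpow (n - (i+1)) B]
    rw [Finset.sum_congr rfl key, Finset.sum_add_distrib]
    -- RHS manipulation
    have hrhs : ∑ i ∈ Finset.range (n + 1),
        ((n+1).choose (i + 1)) • ⁅(A ^ i) (D t), (A ^ (n + 1 - (i + 1))) B⁆
        = ∑ i ∈ Finset.range (n + 1),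
          ((n.choose i) • ⁅(A ^ i) (D t), (A ^ (n - i)) B⁆
            + (n.choose (i+1)) • ⁅(A ^ i) (D t), (A ^ (n - i)) B⁆) := by
      refine Finset.sum_congr rfl fun i hi => ?_
      rw [Nat.choose_succ_succ', add_smul, Nat.succ_sub_succ]
    rw [hrhs, Finset.sum_add_distrib, Finset.sum_range_succ', Finset.sum_range_succ]
    simp only [Nat.choose_succ_self, zero_smul, add_zero, pow_zero,
      Nat.choose_zero_right, one_smul, Nat.sub_zero, Module.End.one_apply]
    rw [hpow n (D B)]
    abel

/-- (Lemma 3.1.4 in monomial form.)  For a derivation `D` of a Lie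
algebra `L` over a commutative ring `R`, and `t B : L`, for every `n`:
`D((ad t)^n B) = ∑_{k=1}^{n} (n choose k) • ⁅(ad t)^{k-1}(D t), (ad t)^{n-k} B⁆
                 + (ad t)^n (D B)`. -/
theorem stmt4 {R : Type*} {L : Type*} [CommRing R] [LieRing L] [LieAlgebra R L]
    (D : L →ₗ[R] L) (hD : ∀ x y : L, D ⁅x, y⁆ = ⁅D x, y⁆ + ⁅x, D y⁆)
    (t B : L) (n : ℕ) :
    D (((LieAlgebra.ad R L t) ^ n) B) =
      (∑ k ∈ Finset.Icc 1 n,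
        (n.choose k) • ⁅((LieAlgebra.ad R L t) ^ (k - 1)) (D t),
                        ((LieAlgebra.ad R L t) ^ (n - k)) B⁆) +
      ((LieAlgebra.ad R L t) ^ n) (D B) := by
  have h := stmt4_aux D hD t B n
  rw [h]
  congr 1
  rw [show Finset.Icc 1 n = Finset.Ico 1 (n+1) by rfl, Finset.sum_Ico_eq_sum_range]
  simp [add_comm 1]
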